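/- arXiv:0801.3691 — 2 statements merged into one kernel-verified Lean document; each statement's English description precedes it below -/
import Mathlib

section
/- (Core estimate of Lemma 2.3.) Let s ∈ ℝ with s > 1, and let z ∈ ℍ satisfy im z < 1 and im(δ·z) ≤ 1 for every δ ∈ Γ. Assume there exists U > 0 such that for every t ≥ 0 the set A(z,t) is finite with Π(z,t) ≤ U·e^t, and assume T₀ ≥ 0 is such that A(h,z,t) = ∅ for all t with 0 ≤ t ≤ T₀ (equivalently, for every δ ∈ Γ with −1/2 ≤ re(δ·z) < 1/2 one has Metric.infDist (δ·z) h > T₀). Then E(z,s) ≤ (e·U·s/(s−1)) · e^{−(s−1)·T₀}. -/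
open scoped UpperHalfPlane MatrixGroups
open UpperHalfPlane

noncomputable section

/-- The parabolic element `T = [[1,1],[0,1]]` of `SL(2,ℝ)`, acting on `ℍ` by `z ↦ z + 1`. -/
def T : SL(2, ℝ) := ⟨!![1, 1; 0, 1], by norm_num [Matrix.det_fin_two_of]⟩

/-- The horocycle segment `h ⊆ ℍ`: points with `-1/2 ≤ re < 1/2` and `im = 1`. -/
def horocycle : Set ℍ := {w : ℍ | -(1 / 2) ≤ w.re ∧ w.re < 1 / 2 ∧ w.im = 1}

variable (Γ : Subgroup SL(2, ℝ))

/-- The cyclic subgroup `Γ∞` of `Γ` generated by `T`. -/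
abbrev GammaInf (hT : T ∈ Γ) : Subgroup Γ := Subgroup.zpowers ⟨T, hT⟩

/-- The set of right cosets `Γ∞\Γ`. -/
abbrev Cosets (hT : T ∈ Γ) := Quotient (QuotientGroup.rightRel (GammaInf Γ hT))

variable (hT : T ∈ Γ)

/-- The term `(im (δ·z))^s` of the Eisenstein series attached to a coset `q ∈ Γ∞\Γ`
(`δ` a representative of `q`; the value is independent of the representative). -/
def eisTerm (z : ℍ) (s : ℝ) (q : Cosets Γ hT) : ℝ :=
  (((Quotient.out q : Γ) : SL(2, ℝ)) • z).im ^ s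

/-- The Eisenstein series `E(z,s) = ∑'_{q ∈ Γ∞\Γ} (im (δ·z))^s`. -/
def Eis (z : ℍ) (s : ℝ) : ℝ := ∑' q : Cosets Γ hT, eisTerm Γ hT z s q

/-- `A(z,t)`: the set of cosets `q ∈ Γ∞\Γ` admitting a representative `δ` with
`dist(i, δ·z) ≤ t`. -/
def Aset (z : ℍ) (t : ℝ) : Set (Cosets Γ hT) :=
  {q | ∃ δ : Γ, Quotient.mk (QuotientGroup.rightRel (GammaInf Γ hT)) δ = q ∧
    dist UpperHalfPlane.I ((δ : SL(2, ℝ)) • z) ≤ t}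

/-- `A(h,z,t)`: the set of cosets `q ∈ Γ∞\Γ` admitting a representative `δ` with
`-1/2 ≤ re(δ·z) < 1/2` and `infDist (δ·z) h ≤ t`. -/
def Ahset (z : ℍ) (t : ℝ) : Set (Cosets Γ hT) :=
  {q | ∃ δ : Γ, Quotient.mk (QuotientGroup.rightRel (GammaInf Γ hT)) δ = q ∧
    -(1 / 2) ≤ ((δ : SL(2, ℝ)) • z).re ∧ ((δ : SL(2, ℝ)) • z).re < 1 / 2 ∧
    Metric.infDist ((δ : SL(2, ℝ)) • z) horocycle ≤ t}

/-!  ### Auxiliary lemmas -/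

section Aux

open Real MeasureTheory Set

/-- `T` acts on `ℍ` as translation by `1`. -/
lemma T_smul_eq (w : ℍ) : T • w = (1 : ℝ) +ᵥ w := by
  rw [UpperHalfPlane.ext_iff, coe_vadd, add_comm, specialLinearGroup_apply, coe_mk]
  simp [T]

lemma T_inv_smul_eq (w : ℍ) : T⁻¹ • w = (-1 : ℝ) +ᵥ w := by
  have h2 : T • ((-1 : ℝ) +ᵥ w) = w := by
    rw [T_smul_eq, vadd_vadd]; norm_num
  conv_lhs => rw [← h2]
  rw [inv_smul_smul]

/-- `T^k` acts on `ℍ` as translation by `k`. -/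
lemma T_zpow_smul_eq (k : ℤ) (w : ℍ) : (T ^ k) • w = (k : ℝ) +ᵥ w := by
  induction k using Int.induction_on generalizing w with
  | zero => simp
  | succ m ih =>
      have : T ^ ((m : ℤ) + 1) = T ^ (m : ℤ) * T := zpow_add_one T m
      rw [this, mul_smul, T_smul_eq, ih, vadd_vadd]
      push_cast
      ring_nf
  | pred m ih =>
      have : T ^ (-(m : ℤ) - 1) = T ^ (-(m : ℤ)) * T⁻¹ := zpow_sub_one T _
      rw [this, mul_smul, T_inv_smul_eq, ih, vadd_vadd]
      push_cast
      ring_nf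

/-- arsinh x ≤ x for x ≥ 0. -/
lemma arsinh_le_self' {x : ℝ} (hx : 0 ≤ x) : Real.arsinh x ≤ x :=
  calc Real.arsinh x ≤ Real.arsinh (Real.sinh x) :=
        Real.arsinh_le_arsinh.2 (Real.self_le_sinh_iff.2 hx)
    _ = x := Real.arsinh_sinh x

lemma I_mem_horocycle : UpperHalfPlane.I ∈ horocycle := by
  refine ⟨?_, ?_, rfl⟩ <;> simp [UpperHalfPlane.I_re] <;> norm_num

/-- Any point of the horocycle segment is within distance 1/2 of `i`. -/
lemma dist_I_horocycle_le {p : ℍ} (hp : p ∈ horocycle) : dist UpperHalfPlane.I p ≤ 1 / 2 := by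
  obtain ⟨h1, h2, h3⟩ := hp
  have him : (UpperHalfPlane.I : ℂ).im = (p : ℂ).im := by
    rw [UpperHalfPlane.coe_im, UpperHalfPlane.coe_im, UpperHalfPlane.I_im, h3]
  have hdist : dist (UpperHalfPlane.I : ℂ) (p : ℂ) = |p.re| := by
    rw [Complex.dist_of_im_eq him]
    simp only [UpperHalfPlane.coe_re, UpperHalfPlane.I_re, Real.dist_eq, zero_sub, abs_neg]
  have habs : |p.re| ≤ 1 / 2 := abs_le.2 ⟨by linarith, h2.le⟩
  rw [UpperHalfPlane.dist_eq, hdist]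
  have h4 : √(UpperHalfPlane.I.im * p.im) = 1 := by
    rw [UpperHalfPlane.I_im, h3]; norm_num
  rw [h4, mul_one]
  have := arsinh_le_self' (x := |p.re| / 2) (by positivity)
  linarith

/-- Lower bound: `dist i w ≤ infDist w h + 1/2`. -/
lemma dist_I_le_infDist_add (w : ℍ) :
    dist UpperHalfPlane.I w ≤ Metric.infDist w horocycle + 1 / 2 := by
  by_contra hcon
  push_neg at hcon
  have hne : horocycle.Nonempty := ⟨UpperHalfPlane.I, I_mem_horocycle⟩
  have hlt : Metric.infDist w horocycle < dist UpperHalfPlane.I w - 1 / 2 := by linarith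
  obtain ⟨p, hp, hplt⟩ := (Metric.infDist_lt_iff hne).1 hlt
  have := dist_I_horocycle_le hp
  have htri : dist UpperHalfPlane.I w ≤ dist UpperHalfPlane.I p + dist p w :=
    dist_triangle _ _ _
  rw [dist_comm p w] at htri
  linarith

/-- Upper bound on distance to the horocycle, for a normalized point below it. -/
lemma infDist_horocycle_le (w : ℍ) (h1 : w.im ≤ 1) (h2 : -(1 / 2) ≤ w.re) (h3 : w.re < 1 / 2) :
    Metric.infDist w horocycle ≤ -Real.log w.im := by
  have hne : (0:ℝ) < (Complex.mk w.re 1).im := one_pos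
  set p : ℍ := UpperHalfPlane.mk (Complex.mk w.re 1) hne with hp
  have hpre : p.re = w.re := rfl
  have hpim : p.im = 1 := rfl
  have hpmem : p ∈ horocycle := ⟨by rw [hpre]; exact h2, by rw [hpre]; exact h3, hpim⟩
  have h4 : Metric.infDist w horocycle ≤ dist w p := Metric.infDist_le_dist_of_mem hpmem
  have h5 : dist w p = -Real.log w.im := by
    rw [UpperHalfPlane.dist_of_re_eq (by rw [hpre]), hpim, Real.log_one, Real.dist_eq, sub_zero,
      abs_of_nonpos (Real.log_nonpos w.im_pos.le h1)]
  rwa [h5] at h4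

/-- The abstract counting/summation core estimate. -/
lemma core_sum_bound {α : Type*} (t term : α → ℝ) (C s T₀ : ℝ)
    (hC : 0 < C) (hs : 1 < s) (hT₀ : 0 ≤ T₀)
    (ht : ∀ a, T₀ < t a)
    (hterm : ∀ a, term a ≤ Real.exp (-(t a)) ^ s)
    (hcount : ∀ r : ℝ, T₀ ≤ r → ∀ F : Finset α, (∀ a ∈ F, t a ≤ r) →
      (F.card : ℝ) ≤ C * Real.exp r)
    (F : Finset α) :
    ∑ a ∈ F, term a ≤ C * s / (s - 1) * Real.exp (-(s - 1) * T₀) := by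
  classical
  set n := F.card with hn
  let e : ↥F ≃ Fin n := (Fintype.equivFin ↥F).trans (finCongr (Fintype.card_coe F))
  let f : Fin n → ℝ := fun i => t ((e.symm i) : α)
  let σ := Tuple.sort f
  have hmono : Monotone (f ∘ σ) := Tuple.monotone_sort f
  set G : ℝ → ℝ := fun x => min (Real.exp (-T₀)) (C / x) ^ s with hG
  have hs0 : (0:ℝ) ≤ s := by linarith
  -- pointwise bound
  have key : ∀ i : Fin n, term ((e.symm (σ i)) : α) ≤ G (((i : ℕ) : ℝ) + 1) := by
    intro i
    set r := f (σ i) with hr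
    have hrT : T₀ < r := ht _
    have hcard : (((i : ℕ) : ℝ) + 1 : ℝ) ≤ C * Real.exp r := by
      have hinj : Function.Injective (fun j : Fin n => ((e.symm (σ j)) : α)) :=
        Subtype.val_injective.comp (e.symm.injective.comp (Equiv.injective σ))
      have hFi := hcount r hrT.le ((Finset.Iic i).image fun j => ((e.symm (σ j)) : α))
        (by
          intro a ha
          simp only [Finset.mem_image, Finset.mem_Iic] at ha
          obtain ⟨j, hj, rfl⟩ := ha
          exact hmono hj)
      rwa [Finset.card_image_of_injective _ hinj, Fin.card_Iic, Nat.cast_add,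
        Nat.cast_one] at hFi
    have hpos : (0:ℝ) < ((i:ℕ):ℝ) + 1 := by positivity
    have h1 : Real.exp (-r) ≤ C / (((i:ℕ):ℝ) + 1) := by
      rw [le_div_iff₀ hpos]
      calc Real.exp (-r) * (((i:ℕ):ℝ) + 1) ≤ Real.exp (-r) * (C * Real.exp r) :=
            mul_le_mul_of_nonneg_left hcard (Real.exp_nonneg _)
        _ = C := by rw [Real.exp_neg]; field_simp
    have h2 : Real.exp (-r) ≤ Real.exp (-T₀) := Real.exp_le_exp.2 (by linarith)
    calc term ((e.symm (σ i)) : α) ≤ Real.exp (-(t ((e.symm (σ i)) : α))) ^ s := hterm _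
      _ = Real.exp (-r) ^ s := rfl
      _ ≤ G (((i:ℕ):ℝ) + 1) := Real.rpow_le_rpow (Real.exp_nonneg _) (le_min h2 h1) hs0
  -- the comparison function and its integrability
  set M := C * Real.exp T₀ with hM
  have hM0 : 0 < M := by positivity
  have hCM : C / M = Real.exp (-T₀) := by
    rw [hM, Real.exp_neg]
    field_simp
  have hG_nonneg : ∀ x : ℝ, 0 < x → 0 ≤ G x := by
    intro x hx
    exact Real.rpow_nonneg (le_min (Real.exp_nonneg _) (div_nonneg hC.le hx.le)) s
  have hGcont : ContinuousOn G (Ioi (0:ℝ)) := by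
    apply ContinuousOn.rpow_const
    · exact continuous_min.comp_continuousOn
        (continuousOn_const.prodMk (continuousOn_const.div continuousOn_id
          (fun x hx => ne_of_gt hx)))
    · exact fun x _ => Or.inr hs0
  have hInt1 : IntegrableOn G (Ioc 0 M) := by
    apply Integrable.mono' (g := fun _ => Real.exp (-T₀) ^ s)
      (integrableOn_const measure_Ioc_lt_top.ne)
      ((hGcont.mono Ioc_subset_Ioi_self).aestronglyMeasurable measurableSet_Ioc)
    filter_upwards [ae_restrict_mem measurableSet_Ioc] with x hx
    rw [Real.norm_eq_abs, abs_of_nonneg (hG_nonneg x hx.1)]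
    exact Real.rpow_le_rpow (le_min (Real.exp_nonneg _) (div_nonneg hC.le hx.1.le))
      (min_le_left _ _) hs0
  have hInt2 : IntegrableOn G (Ioi M) := by
    have hbase : IntegrableOn (fun x : ℝ => C ^ s * x ^ (-s)) (Ioi M) :=
      (integrableOn_Ioi_rpow_of_lt (by linarith) hM0).const_mul _
    apply Integrable.mono' hbase
      ((hGcont.mono (Ioi_subset_Ioi hM0.le)).aestronglyMeasurable measurableSet_Ioi)
    filter_upwards [ae_restrict_mem measurableSet_Ioi] with x hx
    have hx0 : 0 < x := hM0.trans hx
    rw [Real.norm_eq_abs, abs_of_nonneg (hG_nonneg x hx0)]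
    calc G x ≤ (C / x) ^ s :=
          Real.rpow_le_rpow (le_min (Real.exp_nonneg _) (div_nonneg hC.le hx0.le))
            (min_le_right _ _) hs0
      _ = C ^ s * x ^ (-s) := by
          rw [Real.div_rpow hC.le hx0.le, Real.rpow_neg hx0.le, div_eq_mul_inv]
  have hIoc_union : Ioc (0:ℝ) M ∪ Ioi M = Ioi (0:ℝ) := Ioc_union_Ioi_eq_Ioi hM0.le
  have hInt : IntegrableOn G (Ioi (0:ℝ)) := by
    rw [← hIoc_union]
    exact hInt1.union hInt2
  -- step comparison with the integral of G on (k, k+1]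
  have step : ∀ k : ℕ, G ((k:ℝ) + 1) ≤ ∫ x in Ioc (k:ℝ) ((k:ℝ)+1), G x := by
    intro k
    have hsub : Ioc (k:ℝ) ((k:ℝ)+1) ⊆ Ioi (0:ℝ) := fun x hx =>
      lt_of_le_of_lt (Nat.cast_nonneg k) hx.1
    have h1 : (∫ _x in Ioc (k:ℝ) ((k:ℝ)+1), G ((k:ℝ)+1) ∂volume) = G ((k:ℝ)+1) := by
      rw [MeasureTheory.setIntegral_const, measureReal_def, Real.volume_Ioc]
      norm_num
    calc G ((k:ℝ)+1) = ∫ _x in Ioc (k:ℝ) ((k:ℝ)+1), G ((k:ℝ)+1) := h1.symm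
      _ ≤ ∫ x in Ioc (k:ℝ) ((k:ℝ)+1), G x := by
          apply MeasureTheory.setIntegral_mono_on
            (integrableOn_const measure_Ioc_lt_top.ne) (hInt.mono_set hsub)
            measurableSet_Ioc
          intro x hx
          have hx0 : (0:ℝ) < x := hsub hx
          apply Real.rpow_le_rpow
            (le_min (Real.exp_nonneg _) (div_nonneg hC.le (by positivity))) ?_ hs0
          apply le_min (min_le_left _ _)
          refine (min_le_right _ _).trans ?_
          gcongr
          exact hx.2
  have hIntvl : ∀ k : ℕ, k < n → IntervalIntegrable G volume ((k:ℕ):ℝ) (((k+1:ℕ)):ℝ) := by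
    intro k _
    rw [intervalIntegrable_iff_integrableOn_Ioc_of_le (by push_cast; linarith)]
    apply hInt.mono_set
    intro x hx
    have : ((k:ℕ):ℝ) < x := hx.1
    have : (0:ℝ) ≤ (k:ℕ) := Nat.cast_nonneg k
    exact lt_of_le_of_lt this hx.1
  have hadj := intervalIntegral.sum_integral_adjacent_intervals (a := fun k : ℕ => (k:ℝ))
    (f := G) (μ := volume) (n := n) hIntvl
  -- chain everything
  have hsum1 : ∑ a ∈ F, term a = ∑ i : Fin n, term ((e.symm (σ i)) : α) := by
    rw [← Finset.sum_coe_sort F term,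
      ← Equiv.sum_comp (σ.trans e.symm) (fun x : ↥F => term (x : α))]
    rfl
  have hsum2 : ∑ i : Fin n, term ((e.symm (σ i)) : α) ≤
      ∑ i : Fin n, G (((i:ℕ):ℝ) + 1) := Finset.sum_le_sum fun i _ => key i
  have hsum3 : ∑ i : Fin n, G (((i:ℕ):ℝ) + 1) = ∑ k ∈ Finset.range n, G ((k:ℝ) + 1) :=
    Fin.sum_univ_eq_sum_range (fun k => G ((k:ℝ) + 1)) n
  have hsum4 : ∑ k ∈ Finset.range n, G ((k:ℝ)+1) ≤ ∫ x in Ioc (0:ℝ) (n:ℝ), G x := by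
    calc ∑ k ∈ Finset.range n, G ((k:ℝ)+1)
        ≤ ∑ k ∈ Finset.range n, ∫ x in Ioc (k:ℝ) ((k:ℝ)+1), G x :=
          Finset.sum_le_sum fun k _ => step k
      _ = ∑ k ∈ Finset.range n, ∫ x in ((k:ℕ):ℝ)..(((k+1:ℕ)):ℝ), G x := by
          refine Finset.sum_congr rfl fun k _ => ?_
          rw [intervalIntegral.integral_of_le (by push_cast; linarith)]
          push_cast
          rfl
      _ = ∫ x in ((0:ℕ):ℝ)..((n:ℕ):ℝ), G x := hadj
      _ = ∫ x in Ioc (0:ℝ) (n:ℝ), G x := by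
          rw [intervalIntegral.integral_of_le (Nat.cast_le.2 (Nat.zero_le n))]
          norm_num
  have hsum5 : ∫ x in Ioc (0:ℝ) (n:ℝ), G x ≤ ∫ x in Ioi (0:ℝ), G x := by
    refine MeasureTheory.setIntegral_mono_set hInt ?_
      (HasSubset.Subset.eventuallyLE Ioc_subset_Ioi_self)
    exact (ae_restrict_iff' measurableSet_Ioi).2
      (Filter.Eventually.of_forall fun x hx => hG_nonneg x hx)
  -- compute the integral
  have hIoc : ∫ x in Ioc (0:ℝ) M, G x = M * Real.exp (-T₀) ^ s := by
    rw [MeasureTheory.setIntegral_congr_fun measurableSet_Ioc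
      (g := fun _ => Real.exp (-T₀) ^ s) (fun x hx => by
        have hx0 : (0:ℝ) < x := hx.1
        have hmin : Real.exp (-T₀) ≤ C / x := by
          rw [← hCM]
          gcongr
          exact hx.2
        simp only [hG]
        rw [min_eq_left hmin])]
    rw [MeasureTheory.setIntegral_const, measureReal_def, Real.volume_Ioc, smul_eq_mul]
    rw [ENNReal.toReal_ofReal (by linarith)]
    ring
  have hIoi : ∫ x in Ioi M, G x = C ^ s * (M ^ (1 - s) / (s - 1)) := by
    rw [MeasureTheory.setIntegral_congr_fun measurableSet_Ioi
      (g := fun x => C ^ s * x ^ (-s)) (fun x hx => by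
        have hx0 : (0:ℝ) < x := hM0.trans hx
        have hmin : C / x ≤ Real.exp (-T₀) := by
          rw [← hCM]
          gcongr
          exact le_of_lt hx
        simp only [hG]
        rw [min_eq_right hmin, Real.div_rpow hC.le hx0.le, Real.rpow_neg hx0.le,
          div_eq_mul_inv])]
    rw [MeasureTheory.integral_const_mul, integral_Ioi_rpow_of_lt (by linarith) hM0]
    congr 1
    rw [neg_div, ← div_neg]
    congr 1
    · congr 1
      ring
    · ring
  have hsplit : ∫ x in Ioi (0:ℝ), G x = (∫ x in Ioc (0:ℝ) M, G x) + ∫ x in Ioi M, G x := by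
    rw [← hIoc_union, MeasureTheory.setIntegral_union (Ioc_disjoint_Ioi le_rfl)
      measurableSet_Ioi hInt1 hInt2]
  -- final algebra
  have e1 : M * Real.exp (-T₀) ^ s = C * Real.exp (-(s-1) * T₀) := by
    have harg : T₀ + -T₀ * s = -(s-1) * T₀ := by ring
    rw [hM, ← Real.exp_mul, mul_assoc, ← Real.exp_add, harg]
  have e2 : C ^ s * (M ^ (1 - s) / (s - 1)) = C * Real.exp (-(s-1) * T₀) / (s - 1) := by
    have h1 : C ^ s * C ^ (1 - s) = C := by
      rw [← Real.rpow_add hC]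
      norm_num
    have h2 : T₀ * (1 - s) = -(s-1) * T₀ := by ring
    rw [hM, Real.mul_rpow hC.le (Real.exp_nonneg _), ← Real.exp_mul, h2,
      show C ^ s * (C ^ (1-s) * Real.exp (-(s-1)*T₀) / (s-1)) =
        (C ^ s * C ^ (1-s)) * Real.exp (-(s-1)*T₀) / (s-1) from by ring, h1]
  have hfinal : (∫ x in Ioi (0:ℝ), G x) = C * s / (s - 1) * Real.exp (-(s - 1) * T₀) := by
    have hs1 : s - 1 ≠ 0 := ne_of_gt (by linarith)
    rw [hsplit, hIoc, hIoi, e1, e2]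
    field_simp
    ring
  calc ∑ a ∈ F, term a = ∑ i : Fin n, term ((e.symm (σ i)) : α) := hsum1
    _ ≤ ∑ i : Fin n, G (((i:ℕ):ℝ) + 1) := hsum2
    _ = ∑ k ∈ Finset.range n, G ((k:ℝ) + 1) := hsum3
    _ ≤ ∫ x in Ioc (0:ℝ) (n:ℝ), G x := hsum4
    _ ≤ ∫ x in Ioi (0:ℝ), G x := hsum5
    _ = C * s / (s - 1) * Real.exp (-(s - 1) * T₀) := hfinal

end Aux

/-- Core estimate of Lemma 2.3: if `A(h,z,t)` is empty for all `0 ≤ t ≤ T₀`, then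
`E(z,s) ≤ (e U s / (s-1)) e^{-(s-1) T₀}`. -/
theorem eisenstein_upper_bound (s : ℝ) (hs : 1 < s) (z : ℍ) (hz : z.im < 1)
    (hzΓ : ∀ δ : Γ, ((δ : SL(2, ℝ)) • z).im ≤ 1)
    (U : ℝ) (hU : 0 < U)
    (hPi : ∀ t : ℝ, 0 ≤ t →
      (Aset Γ hT z t).Finite ∧ ((Aset Γ hT z t).ncard : ℝ) ≤ U * Real.exp t)
    (T₀ : ℝ) (hT₀ : 0 ≤ T₀)
    (hempty : ∀ t : ℝ, 0 ≤ t → t ≤ T₀ → Ahset Γ hT z t = ∅) :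
    Eis Γ hT z s ≤ Real.exp 1 * U * s / (s - 1) * Real.exp (-(s - 1) * T₀) := by
  classical
  have hs0 : (0:ℝ) ≤ s := by linarith
  have hBpos : 0 ≤ Real.exp 1 * U * s / (s - 1) * Real.exp (-(s - 1) * T₀) := by
    have h1 : 0 < s - 1 := by linarith
    positivity
  rw [Eis]
  refine tsum_le_of_sum_le' hBpos fun F => ?_
  -- the normalized representative of each coset
  set rep : Cosets Γ hT → Γ := fun q =>
    (⟨T, hT⟩ : Γ) ^ (-(⌊(((Quotient.out q : Γ) : SL(2, ℝ)) • z).re + 1/2⌋)) * (Quotient.out q)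
    with hrep
  have hcoe : ∀ q : Cosets Γ hT, ((rep q : Γ) : SL(2, ℝ)) • z =
      ((-(⌊(((Quotient.out q : Γ) : SL(2, ℝ)) • z).re + 1/2⌋) : ℤ) : ℝ) +ᵥ
        (((Quotient.out q : Γ) : SL(2, ℝ)) • z) := by
    intro q
    have hc : ((rep q : Γ) : SL(2, ℝ)) =
        T ^ (-(⌊(((Quotient.out q : Γ) : SL(2, ℝ)) • z).re + 1/2⌋)) *
          ((Quotient.out q : Γ) : SL(2, ℝ)) := by
      rw [hrep]
      push_cast
      rfl
    rw [hc, mul_smul, T_zpow_smul_eq]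
  have hre : ∀ q : Cosets Γ hT,
      -(1/2) ≤ (((rep q : Γ) : SL(2, ℝ)) • z).re ∧ (((rep q : Γ) : SL(2, ℝ)) • z).re < 1/2 := by
    intro q
    set x := (((Quotient.out q : Γ) : SL(2, ℝ)) • z).re with hx
    rw [hcoe q, UpperHalfPlane.vadd_re]
    have h1 := Int.floor_le (x + 1/2)
    have h2 := Int.lt_floor_add_one (x + 1/2)
    constructor <;> push_cast <;> linarith
  have him : ∀ q : Cosets Γ hT,
      (((rep q : Γ) : SL(2, ℝ)) • z).im = (((Quotient.out q : Γ) : SL(2, ℝ)) • z).im := by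
    intro q
    rw [hcoe q, UpperHalfPlane.vadd_im]
  have hmk : ∀ q : Cosets Γ hT,
      Quotient.mk (QuotientGroup.rightRel (GammaInf Γ hT)) (rep q) = q := by
    intro q
    conv_rhs => rw [← Quotient.out_eq q]
    refine Quotient.sound (QuotientGroup.rightRel_apply.mpr ?_)
    have : (Quotient.out q : Γ) * (rep q)⁻¹ =
        (⟨T, hT⟩ : Γ) ^ (⌊(((Quotient.out q : Γ) : SL(2, ℝ)) • z).re + 1/2⌋) := by
      rw [hrep]
      group
    rw [this]
    exact Subgroup.zpow_mem_zpowers _ _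
  -- the distance function
  set td : Cosets Γ hT → ℝ := fun q =>
    Metric.infDist (((rep q : Γ) : SL(2, ℝ)) • z) horocycle with htd
  have ht : ∀ q : Cosets Γ hT, T₀ < td q := by
    intro q
    by_contra hcon
    push_neg at hcon
    have h0 : 0 ≤ td q := Metric.infDist_nonneg
    have := hempty (td q) h0 hcon
    have hqmem : q ∈ Ahset Γ hT z (td q) :=
      ⟨rep q, hmk q, (hre q).1, (hre q).2, le_rfl⟩
    rw [this] at hqmem
    exact hqmem
  have hterm : ∀ q : Cosets Γ hT, eisTerm Γ hT z s q ≤ Real.exp (-(td q)) ^ s := by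
    intro q
    have hy0 : 0 < (((rep q : Γ) : SL(2, ℝ)) • z).im := UpperHalfPlane.im_pos _
    have hy1 : (((rep q : Γ) : SL(2, ℝ)) • z).im ≤ 1 := hzΓ (rep q)
    have hlog := infDist_horocycle_le (((rep q : Γ) : SL(2, ℝ)) • z) hy1 (hre q).1 (hre q).2
    have hyle : (((rep q : Γ) : SL(2, ℝ)) • z).im ≤ Real.exp (-(td q)) := by
      rw [← Real.exp_log hy0]
      exact Real.exp_le_exp.2 (by simp only [htd] at hlog ⊢; linarith)
    have : eisTerm Γ hT z s q = (((rep q : Γ) : SL(2, ℝ)) • z).im ^ s := by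
      rw [eisTerm, him q]
    rw [this]
    exact Real.rpow_le_rpow hy0.le hyle hs0
  have hcount : ∀ r : ℝ, T₀ ≤ r → ∀ F' : Finset (Cosets Γ hT),
      (∀ q ∈ F', td q ≤ r) → (F'.card : ℝ) ≤ (Real.exp 1 * U) * Real.exp r := by
    intro r hr F' hF'
    have hr1 : (0:ℝ) ≤ r + 1 := by linarith
    have hsub : (F' : Set (Cosets Γ hT)) ⊆ Aset Γ hT z (r + 1) := by
      intro q hq
      have hdist := dist_I_le_infDist_add (((rep q : Γ) : SL(2, ℝ)) • z)
      have := hF' q hq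
      exact ⟨rep q, hmk q, by simp only [htd] at this; linarith⟩
    have hfin := (hPi (r+1) hr1).1
    have hle := (hPi (r+1) hr1).2
    have hcard : ((F' : Set (Cosets Γ hT)).ncard : ℝ) ≤ ((Aset Γ hT z (r+1)).ncard : ℝ) := by
      exact_mod_cast Nat.cast_le.2 (Set.ncard_le_ncard hsub hfin)
    rw [Set.ncard_coe_finset] at hcard
    calc (F'.card : ℝ) ≤ ((Aset Γ hT z (r+1)).ncard : ℝ) := hcard
      _ ≤ U * Real.exp (r+1) := hle
      _ = (Real.exp 1 * U) * Real.exp r := by rw [Real.exp_add]; ring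
  have := core_sum_bound td (eisTerm Γ hT z s) (Real.exp 1 * U) s T₀
    (by positivity) hs hT₀ ht hterm hcount F
  exact this
end
end

section
/- (Convergence and uniform bound for the Eisenstein series.) Let s ∈ ℝ with s > 1, and let z ∈ ℍ satisfy im z < 1 and im(δ·z) ≤ 1 for every δ ∈ Γ. Assume there exists U > 0 such that for every t ≥ 0 the set A(z,t) is finite with Π(z,t) ≤ U·e^t. Then the function q ↦ (im(δ·z))^s on Γ∞\Γ (δ any representative of q) is summable, and E(z,s) ≤ e·U·s/(s−1). -/
open scoped UpperHalfPlane MatrixGroups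
open UpperHalfPlane

noncomputable section

open scoped ENNReal

open MeasureTheory in
lemma auxIneq (a b r : ℝ) (ha : 2.7 < a) (hb0 : 0 ≤ b) (hb1 : b ≤ 1) (hr : r^2 ≤ 1/4) :
    (r^2 + (1-b)^2) * a ≤ (a-b)^2 := by
  have e1 : r^2 * a ≤ (1/4) * a := by nlinarith
  have e2 : b*b*(a-1) ≤ 1*(a-1) := by nlinarith [mul_le_one₀ hb1 hb0 hb1]
  have e3 : a*a ≥ 2.7*a := by nlinarith
  nlinarith [e1, e2, e3]

lemma dist_I_le (w : ℍ) (h1 : w.im ≤ 1) (hre1 : -(1/2) ≤ w.re) (hre2 : w.re < 1/2) :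
    dist UpperHalfPlane.I w ≤ 1 - Real.log w.im := by
  have hy : 0 < w.im := w.im_pos
  set E : ℝ := Real.exp (1/2) with hE
  set Y : ℝ := Real.exp (Real.log w.im / 2) with hY
  have hEpos : 0 < E := Real.exp_pos _
  have hYpos : 0 < Y := Real.exp_pos _
  have hY2 : Y ^ 2 = w.im := by
    rw [hY, ← Real.exp_nat_mul]
    push_cast
    rw [show (2:ℝ) * (Real.log w.im / 2) = Real.log w.im by ring, Real.exp_log hy]
  have hE2 : (2.7182818283 : ℝ) < E ^ 2 := by
    rw [hE, ← Real.exp_nat_mul]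
    push_cast
    rw [show (2:ℝ) * (1/2) = 1 by ring]
    exact Real.exp_one_gt_d9
  have hb : 0 ≤ (E ^ 2 - Y ^ 2) / E := by
    apply div_nonneg _ hEpos.le
    nlinarith
  have key : dist (UpperHalfPlane.I : ℂ) (w : ℂ) ≤ (E ^ 2 - Y ^ 2) / E := by
    rw [Complex.dist_eq_re_im]
    rw [show ((E^2-Y^2)/E) = Real.sqrt (((E^2-Y^2)/E)^2) from (Real.sqrt_sq hb).symm]
    apply Real.sqrt_le_sqrt
    have e1 : (UpperHalfPlane.I : ℂ).re = 0 := by simp [UpperHalfPlane.I]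
    have e2 : (UpperHalfPlane.I : ℂ).im = 1 := by simp [UpperHalfPlane.I]
    have e3 : (w : ℂ).re = w.re := rfl
    have e4 : (w : ℂ).im = w.im := rfl
    rw [e1, e2, e3, e4, ← hY2]
    have h5 : Y ^ 2 ≤ 1 := by nlinarith
    have h6 : ((E^2-Y^2)/E)^2 = (E^2-Y^2)^2/E^2 := by ring
    rw [h6, le_div_iff₀ (by positivity)]
    have h7 : w.re ^ 2 ≤ 1/4 := by nlinarith
    have h12 : (2.7:ℝ) < E^2 := by nlinarith
    have := auxIneq (E^2) (Y^2) w.re h12 (by positivity) h5 h7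
    nlinarith [this]
  rw [UpperHalfPlane.dist_le_iff_le_sinh]
  have hIim : (UpperHalfPlane.I).im = 1 := rfl
  rw [hIim]
  have hsq : Real.sqrt (1 * w.im) = Y := by
    rw [one_mul, ← hY2, Real.sqrt_sq hYpos.le]
  rw [hsq]
  have hsinh : Real.sinh ((1 - Real.log w.im) / 2) = (E / Y - Y / E) / 2 := by
    rw [Real.sinh_eq]
    congr 1
    rw [show (1 - Real.log w.im) / 2 = 1/2 - Real.log w.im / 2 by ring, Real.exp_sub,
      neg_sub, Real.exp_sub]
  rw [hsinh, div_le_div_iff₀ (by positivity) (by norm_num)]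
  calc dist (UpperHalfPlane.I : ℂ) (w : ℂ) * 2 ≤ ((E^2-Y^2)/E) * 2 := by linarith
    _ = (E / Y - Y / E) * (2 * Y) := by field_simp

lemma smul_map_eq (g : SL(2,ℤ)) (w : ℍ) :
    (Matrix.SpecialLinearGroup.map (Int.castRingHom ℝ) g) • w = g • w := rfl

lemma T_eq_map : T = Matrix.SpecialLinearGroup.map (Int.castRingHom ℝ) ModularGroup.T := by
  ext i j
  fin_cases i <;> fin_cases j <;>
    simp [T, Matrix.SpecialLinearGroup.map_apply_coe, ModularGroup.coe_T]

lemma T_zpow_smul (n : ℤ) (w : ℍ) : (T ^ n) • w = (n : ℝ) +ᵥ w := by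
  rw [T_eq_map, ← map_zpow, smul_map_eq, modular_T_zpow_smul]

open MeasureTheory in
lemma lint_exp (c a : ℝ) (hc : 0 < c) :
    ∫⁻ t in Set.Ioi a, ENNReal.ofReal (c * Real.exp (-(c*t)))
      = ENNReal.ofReal (Real.exp (-(c*a))) := by
  have hint : IntegrableOn (fun t => c * Real.exp (-(c*t))) (Set.Ioi a) := by
    have := (exp_neg_integrableOn_Ioi a hc).const_mul c
    simp only [neg_mul] at this
    exact this
  rw [← ofReal_integral_eq_lintegral_ofReal hint
    (Filter.Eventually.of_forall fun t => by positivity)]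
  congr 1
  have hderiv : ∀ x ∈ Set.Ici a, HasDerivAt (fun t => -Real.exp (-(c*t)))
      (c * Real.exp (-(c*x))) x := fun x _ => ProbabilityTheory.hasDerivAt_neg_exp_mul_exp
  have htend : Filter.Tendsto (fun t => -Real.exp (-(c*t))) Filter.atTop (nhds 0) := by
    have hmul : Filter.Tendsto (fun t : ℝ => c * t) Filter.atTop Filter.atTop :=
      Filter.tendsto_id.const_mul_atTop hc
    have h2 := (Real.tendsto_exp_neg_atTop_nhds_zero.comp hmul).neg
    rw [neg_zero] at h2
    exact h2
  rw [MeasureTheory.integral_Ioi_of_hasDerivAt_of_tendsto' hderiv hint htend]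
  simp

open MeasureTheory in
lemma lint_ind (a : ℝ) (ha : 0 ≤ a) (f : ℝ → ℝ≥0∞) :
    ∫⁻ t in Set.Ioi (0:ℝ), Set.indicator (Set.Ioi a) f t = ∫⁻ t in Set.Ioi a, f t := by
  rw [lintegral_indicator measurableSet_Ioi f, Measure.restrict_restrict measurableSet_Ioi,
    Set.Ioi_inter_Ioi, max_eq_left ha]

variable (Γ : Subgroup SL(2, ℝ))

variable (hT : T ∈ Γ)


lemma exists_good_rep (z : ℍ) (q : Cosets Γ hT) :
    ∃ δ : Γ, Quotient.mk (QuotientGroup.rightRel (GammaInf Γ hT)) δ = q ∧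
      ((δ : SL(2,ℝ)) • z).im = (((Quotient.out q : Γ) : SL(2,ℝ)) • z).im ∧
      -(1/2) ≤ ((δ : SL(2,ℝ)) • z).re ∧ ((δ : SL(2,ℝ)) • z).re < 1/2 := by
  set δ0 : Γ := Quotient.out q with hδ0
  set w : ℍ := ((δ0 : SL(2,ℝ))) • z with hw
  set n : ℤ := -⌊w.re + 1/2⌋ with hn
  refine ⟨(⟨T, hT⟩ : Γ) ^ n * δ0, ?_, ?_⟩
  · rw [← Quotient.out_eq q, ← hδ0]
    apply Quotient.sound
    exact QuotientGroup.rightRel_apply.mpr (Subgroup.mem_zpowers_iff.mpr ⟨-n, by group⟩)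
  · have hcoe : (((⟨T, hT⟩ : Γ) ^ n * δ0 : Γ) : SL(2,ℝ)) = T ^ n * (δ0 : SL(2,ℝ)) := by
      push_cast
      rfl
    rw [hcoe, mul_smul, ← hw, T_zpow_smul]
    refine ⟨vadd_im _ _, ?_, ?_⟩
    · rw [vadd_re, hn]
      push_cast
      have := Int.floor_le (w.re + 1/2)
      linarith
    · rw [vadd_re, hn]
      push_cast
      have := Int.lt_floor_add_one (w.re + 1/2)
      linarith

/-- Convergence and uniform bound: under the counting bound `Π(z,t) ≤ U e^t`, the Eisenstein
series is summable and `E(z,s) ≤ e U s / (s-1)`. -/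
theorem eisenstein_summable_and_bounded (s : ℝ) (hs : 1 < s) (z : ℍ) (hz : z.im < 1)
    (hzΓ : ∀ δ : Γ, ((δ : SL(2, ℝ)) • z).im ≤ 1)
    (U : ℝ) (hU : 0 < U)
    (hPi : ∀ t : ℝ, 0 ≤ t →
      (Aset Γ hT z t).Finite ∧ ((Aset Γ hT z t).ncard : ℝ) ≤ U * Real.exp t) :
    Summable (eisTerm Γ hT z s) ∧ Eis Γ hT z s ≤ Real.exp 1 * U * s / (s - 1) := by
  classical
  have hs1 : (0:ℝ) < s - 1 := by linarith
  have hs0 : (0:ℝ) < s := by linarith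
  set C : ℝ := Real.exp 1 * U * s / (s - 1) with hC
  have hCnn : 0 ≤ C := by positivity
  set y : Cosets Γ hT → ℝ := fun q => (((Quotient.out q : Γ) : SL(2, ℝ)) • z).im with hy
  have hypos : ∀ q, 0 < y q := fun q => UpperHalfPlane.im_pos _
  have hyle : ∀ q, y q ≤ 1 := fun q => hzΓ _
  set a : Cosets Γ hT → ℝ := fun q => -Real.log (y q) with ha
  have hann : ∀ q, 0 ≤ a q := fun q =>
    neg_nonneg.mpr (Real.log_nonpos (hypos q).le (hyle q))
  have htn : ∀ q, 0 ≤ eisTerm Γ hT z s q := fun q => Real.rpow_nonneg (hypos q).le s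
  have hterm : ∀ q, eisTerm Γ hT z s q = Real.exp (-(s * a q)) := by
    intro q
    show y q ^ s = _
    rw [Real.rpow_def_of_pos (hypos q)]
    congr 1
    have haq : a q = -Real.log (y q) := rfl
    rw [haq]; ring
  have hsub : ∀ t : ℝ, 0 ≤ t → {q | a q < t} ⊆ Aset Γ hT z (t+1) := by
    intro t ht q hq
    obtain ⟨δ, hmk, him, hre1, hre2⟩ := exists_good_rep Γ hT z q
    refine ⟨δ, hmk, ?_⟩
    have hd := dist_I_le _ (by rw [him]; exact hyle q) hre1 hre2
    rw [him] at hd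
    have h2 : a q < t := hq
    have h3 : -Real.log (y q) < t := by rwa [ha] at h2
    calc dist UpperHalfPlane.I ((δ : SL(2,ℝ)) • z) ≤ 1 - Real.log (y q) := hd
      _ ≤ t + 1 := by linarith
  have hcnt : Countable (Cosets Γ hT) := by
    rw [← Set.countable_univ_iff]
    have hsub2 : (Set.univ : Set (Cosets Γ hT)) ⊆ ⋃ n : ℕ, Aset Γ hT z n := by
      intro q _
      refine Set.mem_iUnion.mpr
        ⟨⌈dist UpperHalfPlane.I (((Quotient.out q : Γ) : SL(2,ℝ)) • z)⌉₊, ?_⟩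
      exact ⟨Quotient.out q, Quotient.out_eq q, Nat.le_ceil _⟩
    exact Set.Countable.mono hsub2
      (Set.countable_iUnion fun n => ((hPi n (Nat.cast_nonneg n)).1).countable)
  set gE : ℝ → ℝ≥0∞ := fun t => ENNReal.ofReal (s * Real.exp (-(s*t))) with hgE
  have hgEm : Measurable gE := by
    apply Measurable.ennreal_ofReal
    fun_prop
  have hqm : ∀ q : Cosets Γ hT, AEMeasurable
      (fun t => Set.indicator (Set.Ioi (a q)) gE t)
      (MeasureTheory.volume.restrict (Set.Ioi (0:ℝ))) :=
    fun q => ((hgEm.indicator measurableSet_Ioi)).aemeasurable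
  have hswap : ∑' q, ENNReal.ofReal (eisTerm Γ hT z s q)
      = ∫⁻ t in Set.Ioi (0:ℝ), ∑' q, Set.indicator (Set.Ioi (a q)) gE t := by
    refine Eq.trans (tsum_congr fun q => ?_) (MeasureTheory.lintegral_tsum hqm).symm
    rw [lint_ind (a q) (hann q) gE, hgE, lint_exp s (a q) hs0, hterm q]
  have hpt : ∀ t : ℝ, (∑' q, Set.indicator (Set.Ioi (a q)) gE t)
      ≤ ENNReal.ofReal (U * Real.exp (t+1)) * gE t := by
    intro t
    by_cases ht : 0 < t
    · have heq : ∀ q : Cosets Γ hT, Set.indicator (Set.Ioi (a q)) gE t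
          = Set.indicator {q' | a q' < t} (fun _ => gE t) q := by
        intro q
        by_cases h : a q < t
        · rw [Set.indicator_of_mem (Set.mem_Ioi.mpr h),
            Set.indicator_of_mem (show q ∈ {q' | a q' < t} from h)]
        · rw [Set.indicator_of_notMem (by simpa using h),
            Set.indicator_of_notMem (show q ∉ {q' | a q' < t} from h)]
      rw [tsum_congr heq]
      set S : Set (Cosets Γ hT) := {q' | a q' < t} with hS
      have hSA : S ⊆ Aset Γ hT z (t+1) := hsub t ht.le
      have hfin : S.Finite := ((hPi (t+1) (by linarith)).1).subset hSA
      rw [tsum_eq_sum (s := hfin.toFinset)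
        (fun q hq => Set.indicator_of_notMem (fun hmem => hq (hfin.mem_toFinset.mpr hmem)) _)]
      have hsc : ∀ q ∈ hfin.toFinset, Set.indicator S (fun _ => gE t) q = gE t := fun q hq =>
        Set.indicator_of_mem (hfin.mem_toFinset.mp hq) _
      rw [Finset.sum_congr rfl hsc, Finset.sum_const, nsmul_eq_mul]
      apply mul_le_mul_left
      have hcard : (hfin.toFinset.card : ℝ) ≤ U * Real.exp (t+1) := by
        have h1' : hfin.toFinset.card = S.ncard := by
          rw [Set.ncard_eq_toFinset_card S hfin]
        have h2 : S.ncard ≤ (Aset Γ hT z (t+1)).ncard :=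
          Set.ncard_le_ncard hSA (hPi (t+1) (by linarith)).1
        have h3 := (hPi (t+1) (by linarith)).2
        rw [h1']
        calc (S.ncard : ℝ) ≤ ((Aset Γ hT z (t+1)).ncard : ℝ) := by exact_mod_cast h2
          _ ≤ U * Real.exp (t+1) := h3
      calc (hfin.toFinset.card : ℝ≥0∞) = ENNReal.ofReal (hfin.toFinset.card : ℝ) := by
            rw [ENNReal.ofReal_natCast]
        _ ≤ _ := ENNReal.ofReal_le_ofReal hcard
    · have hz0 : ∀ q : Cosets Γ hT, Set.indicator (Set.Ioi (a q)) gE t = 0 := fun q =>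
        Set.indicator_of_notMem
          (by simp only [Set.mem_Ioi, not_lt]; linarith [hann q]) _
      rw [tsum_congr hz0, tsum_zero]
      exact zero_le'
  have hbound : ∑' q, ENNReal.ofReal (eisTerm Γ hT z s q) ≤ ENNReal.ofReal C := by
    rw [hswap]
    refine le_trans (MeasureTheory.lintegral_mono fun t => hpt t) ?_
    have heqf : ∀ t : ℝ, ENNReal.ofReal (U * Real.exp (t+1)) * gE t
        = ENNReal.ofReal C * ENNReal.ofReal ((s-1) * Real.exp (-((s-1)*t))) := by
      intro t
      rw [hgE, ← ENNReal.ofReal_mul (by positivity), ← ENNReal.ofReal_mul hCnn]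
      congr 1
      have h1 : Real.exp (t+1) * Real.exp (-(s*t)) = Real.exp 1 * Real.exp (-((s-1)*t)) := by
        rw [← Real.exp_add, ← Real.exp_add]; congr 1; ring
      have h2 : C * (s-1) = Real.exp 1 * U * s := by
        rw [hC]; field_simp
      linear_combination U * s * h1 - Real.exp (-((s-1)*t)) * h2
    rw [MeasureTheory.lintegral_congr heqf,
      MeasureTheory.lintegral_const_mul _ (by exact Measurable.ennreal_ofReal (by fun_prop)),
      lint_exp (s-1) 0 hs1]
    apply le_of_eq
    norm_num
  have hne : (∑' q, ENNReal.ofReal (eisTerm Γ hT z s q)) ≠ ⊤ :=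
    (lt_of_le_of_lt hbound ENNReal.ofReal_lt_top).ne
  have hsumm : Summable (eisTerm Γ hT z s) := by
    refine (ENNReal.summable_toReal hne).congr fun q => ?_
    rw [ENNReal.toReal_ofReal (htn q)]
  refine ⟨hsumm, ?_⟩
  have heq : ENNReal.ofReal (Eis Γ hT z s) = ∑' q, ENNReal.ofReal (eisTerm Γ hT z s q) :=
    ENNReal.ofReal_tsum_of_nonneg htn hsumm
  exact (ENNReal.ofReal_le_ofReal_iff hCnn).mp (heq ▸ hbound)
end
end
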